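/- arXiv:2404.14101 — 2 statements merged into one kernel-verified Lean document; each statement's English description precedes it below -/
import Mathlib

section
/- For n = 3 with coefficients c₀ = (1 + (√2 - 1)i)/4, c₁ = (1 - (√2 + 1)i)/4, c₂ = ((1 + √2) + i)/4, c₃ = ((1 - √2) + i)/4, the polynomial p₃(s) = c₀·s₀ + c₁·s₁ + c₂·s₂ + c₃·s₀·s₁·s₂ takes, as s = (s₀, s₁, s₂) ranges over {±1}³, exactly the eight values e^{iπk/4}, k = 0, ..., 7, each attained exactly once. -/
noncomputable def pe3aux_ω : ℂ := (Real.sqrt 2 / 2 : ℝ) + (Real.sqrt 2 / 2 : ℝ) * Complex.I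

lemma pe3aux_sqrtC : ((Real.sqrt 2 : ℝ) : ℂ) * ((Real.sqrt 2 : ℝ) : ℂ) = 2 := by
  norm_cast
  rw [Real.mul_self_sqrt] ; norm_num

lemma pe3aux_expω : Complex.exp (2 * Real.pi * Complex.I / 8) = pe3aux_ω := by
  have : (2 * (Real.pi:ℂ) * Complex.I / 8) = ((Real.pi/4 : ℝ) : ℂ) * Complex.I := by
    push_cast; ring
  rw [this, Complex.exp_mul_I, ← Complex.ofReal_cos, ← Complex.ofReal_sin]
  simp [Real.cos_pi_div_four, Real.sin_pi_div_four, pe3aux_ω]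

lemma pe3aux_expk (k : ℕ) :
    Complex.exp (2 * Real.pi * Complex.I * k / 8) = pe3aux_ω ^ k := by
  rw [← pe3aux_expω, ← Complex.exp_nat_mul]; ring_nf

lemma pe3aux_pow2 : pe3aux_ω ^ 2 = Complex.I := by
  unfold pe3aux_ω
  push_cast
  linear_combination ((1 + 2*Complex.I + Complex.I*Complex.I)/4) * pe3aux_sqrtC
    + (1/2) * Complex.I_mul_I

lemma pe3aux_pow3 : pe3aux_ω ^ 3 =
    -((Real.sqrt 2 : ℝ) : ℂ)/2 + (((Real.sqrt 2 : ℝ) : ℂ)/2) * Complex.I := by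
  have h : pe3aux_ω ^ 3 = pe3aux_ω ^ 2 * pe3aux_ω := by ring
  rw [h, pe3aux_pow2]
  unfold pe3aux_ω
  push_cast
  linear_combination (((Real.sqrt 2 : ℝ) : ℂ)/2) * Complex.I_mul_I

lemma pe3aux_pow4 : pe3aux_ω ^ 4 = -1 := by
  have h : pe3aux_ω ^ 4 = (pe3aux_ω ^ 2) ^ 2 := by ring
  rw [h, pe3aux_pow2, Complex.I_sq]

lemma pe3aux_pow5 : pe3aux_ω ^ 5 =
    -((Real.sqrt 2 : ℝ) : ℂ)/2 - (((Real.sqrt 2 : ℝ) : ℂ)/2) * Complex.I := by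
  have h : pe3aux_ω ^ 5 = (pe3aux_ω ^ 4) * pe3aux_ω := by ring
  rw [h, pe3aux_pow4]
  unfold pe3aux_ω
  push_cast; ring

lemma pe3aux_pow6 : pe3aux_ω ^ 6 = -Complex.I := by
  have h : pe3aux_ω ^ 6 = (pe3aux_ω ^ 4) * pe3aux_ω ^ 2 := by ring
  rw [h, pe3aux_pow4, pe3aux_pow2]; ring

lemma pe3aux_pow7 : pe3aux_ω ^ 7 =
    ((Real.sqrt 2 : ℝ) : ℂ)/2 - (((Real.sqrt 2 : ℝ) : ℂ)/2) * Complex.I := by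
  have h : pe3aux_ω ^ 7 = (pe3aux_ω ^ 4) * pe3aux_ω ^ 3 := by ring
  rw [h, pe3aux_pow4, pe3aux_pow3]; ring

set_option maxHeartbeats 3200000 in
/-- The `n = 3` phase-encoding polynomial is a bijection from `{±1}³` onto the
eighth roots of unity `e^{2πik/8}`, `k = 0, …, 7`, each attained exactly once. -/
theorem phase_encoding_three :
    Set.BijOn
      (fun s : Fin 3 → ℝ =>
        ((1 + (Real.sqrt 2 - 1) * Complex.I) / 4) * (s 0 : ℝ) +
        ((1 - (Real.sqrt 2 + 1) * Complex.I) / 4) * (s 1 : ℝ) +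
        (((1 + Real.sqrt 2) + Complex.I) / 4) * (s 2 : ℝ) +
        (((1 - Real.sqrt 2) + Complex.I) / 4) * ((s 0 : ℝ) * (s 1 : ℝ) * (s 2 : ℝ)))
      {s : Fin 3 → ℝ | ∀ i, s i = 1 ∨ s i = -1}
      {z : ℂ | ∃ k : ℕ, k < 8 ∧ z = Complex.exp (2 * Real.pi * Complex.I * k / 8)} := by
  refine ⟨?_, ?_, ?_⟩
  · -- MapsTo
    intro s hs
    rcases hs 0 with h0|h0 <;> rcases hs 1 with h1|h1 <;> rcases hs 2 with h2|h2 <;>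
      simp only [Set.mem_setOf_eq, h0, h1, h2]
    · exact ⟨0, by norm_num, by rw [pe3aux_expk, pow_zero]; push_cast; ring⟩
    · exact ⟨6, by norm_num, by rw [pe3aux_expk, pe3aux_pow6]; push_cast; ring⟩
    · exact ⟨1, by norm_num, by rw [pe3aux_expk, pow_one]; unfold pe3aux_ω; push_cast; ring⟩
    · exact ⟨3, by norm_num, by rw [pe3aux_expk, pe3aux_pow3]; push_cast; ring⟩
    · exact ⟨7, by norm_num, by rw [pe3aux_expk, pe3aux_pow7]; push_cast; ring⟩
    · exact ⟨5, by norm_num, by rw [pe3aux_expk, pe3aux_pow5]; push_cast; ring⟩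
    · exact ⟨2, by norm_num, by rw [pe3aux_expk, pe3aux_pow2]; push_cast; ring⟩
    · exact ⟨4, by norm_num, by rw [pe3aux_expk, pe3aux_pow4]; push_cast; ring⟩
  · -- InjOn
    intro s hs s' hs' h
    simp only [Set.mem_setOf_eq] at hs hs'
    rcases hs 0 with h0|h0 <;> rcases hs 1 with h1|h1 <;> rcases hs 2 with h2|h2 <;>
      rcases hs' 0 with g0|g0 <;> rcases hs' 1 with g1|g1 <;> rcases hs' 2 with g2|g2 <;>
      simp only [h0, h1, h2, g0, g1, g2] at h <;>
      first
      | (funext i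
         fin_cases i <;>
           first
           | exact h0.trans g0.symm
           | exact h1.trans g1.symm
           | exact h2.trans g2.symm)
      | (exfalso
         have hr2 : Real.sqrt 2 * Real.sqrt 2 = 2 := Real.mul_self_sqrt (by norm_num)
         have hre := congrArg Complex.re h
         have him := congrArg Complex.im h
         field_simp at hre him
         norm_num [Complex.ext_iff] at hre
         all_goals norm_num [Complex.ext_iff] at him
         try nlinarith [hr2, Real.sqrt_nonneg 2]
         done)
  · -- SurjOn
    rintro z ⟨k, hk, rfl⟩
    interval_cases k
    · exact ⟨![1,1,1], fun i => by fin_cases i <;> norm_num,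
        by rw [pe3aux_expk, pow_zero]; norm_num; push_cast; ring⟩
    · exact ⟨![1,-1,1], fun i => by fin_cases i <;> norm_num,
        by rw [pe3aux_expk, pow_one]; unfold pe3aux_ω; norm_num; push_cast; ring⟩
    · exact ⟨![-1,-1,1], fun i => by fin_cases i <;> norm_num,
        by rw [pe3aux_expk, pe3aux_pow2]; norm_num; push_cast; ring⟩
    · exact ⟨![1,-1,-1], fun i => by fin_cases i <;> norm_num,
        by rw [pe3aux_expk, pe3aux_pow3]; norm_num; push_cast; ring⟩
    · exact ⟨![-1,-1,-1], fun i => by fin_cases i <;> norm_num,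
        by rw [pe3aux_expk, pe3aux_pow4]; norm_num; push_cast; ring⟩
    · exact ⟨![-1,1,-1], fun i => by fin_cases i <;> norm_num,
        by rw [pe3aux_expk, pe3aux_pow5]; norm_num; push_cast; ring⟩
    · exact ⟨![1,1,-1], fun i => by fin_cases i <;> norm_num,
        by rw [pe3aux_expk, pe3aux_pow6]; norm_num; push_cast; ring⟩
    · exact ⟨![-1,1,1], fun i => by fin_cases i <;> norm_num,
        by rw [pe3aux_expk, pe3aux_pow7]; norm_num; push_cast; ring⟩
end

section
/- For every positive integer n, there exists a function p from {±1}ⁿ to ℂ of the form p(s) = Σ_{T} c_T · Π_{j ∈ T} s_j, where T ranges over a family of 2^{n-1} subsets of {0, ..., n-1} (namely the subsets of odd size), such that p is a bijection from {±1}ⁿ onto the set of 2ⁿ-th roots of unity {e^{2πik/2ⁿ} : k = 0, ..., 2ⁿ - 1}. -/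
open Complex Finset

namespace PhaseAux

/-- sign of a boolean -/
def sg (b : Bool) : ℝ := if b then 1 else -1

lemma sg_not (b : Bool) : ((sg (!b) : ℝ) : ℂ) = -((sg b : ℝ) : ℂ) := by
  cases b <;> simp [sg]

lemma sg_mul_self (b : Bool) : ((sg b : ℝ) : ℂ) * ((sg b : ℝ) : ℂ) = 1 := by
  cases b <;> norm_num [sg]

variable {m : ℕ}

/-- twist: XOR every coordinate except the last with the last coordinate -/
def tw (b : Fin (m + 1) → Bool) : Fin (m + 1) → Bool :=
  fun j => if j = Fin.last m then b j else xor (b j) (b (Fin.last m))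

lemma tw_invol : Function.Involutive (tw (m := m)) := by
  intro b; funext j
  by_cases h : j = Fin.last m <;> simp [tw, h, Bool.xor_assoc]

/-- the encoding equivalence -/
def EE : (Fin (m + 1) → Bool) ≃ Fin (2 ^ (m + 1)) :=
  (Function.Involutive.toPerm _ tw_invol).trans
    ((Equiv.piCongrRight fun _ => finTwoEquiv.symm).trans finFunctionFinEquiv)

def KK (b : Fin (m + 1) → Bool) : ℕ := (EE b : ℕ)

lemma KK_lt (b : Fin (m + 1) → Bool) : KK b < 2 ^ (m + 1) := (EE b).isLt

lemma KK_inj : Function.Injective (KK (m := m)) := by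
  intro a b h
  exact EE.injective (Fin.ext h)

lemma KK_surj {k : ℕ} (hk : k < 2 ^ (m + 1)) : ∃ b : Fin (m + 1) → Bool, KK b = k :=
  ⟨EE.symm ⟨k, hk⟩, by simp [KK]⟩

lemma finTwoEquiv_symm_val (x : Bool) : ((finTwoEquiv.symm x : Fin 2) : ℕ) = x.toNat := by
  cases x <;> rfl

lemma KK_eq (b : Fin (m + 1) → Bool) :
    KK b = (∑ i : Fin m, (tw b i.castSucc).toNat * 2 ^ (i : ℕ)) + (b (Fin.last m)).toNat * 2 ^ m := by
  have : KK b = ∑ i : Fin (m+1), (tw b i).toNat * 2 ^ (i : ℕ) := by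
    simp only [KK, EE, Equiv.trans_apply, finFunctionFinEquiv_apply]
    congr 1; funext i
    simp [finTwoEquiv_symm_val, Function.Involutive.toPerm]
  rw [this, Fin.sum_univ_castSucc]
  simp [tw]

lemma tw_not (b : Fin (m + 1) → Bool) (i : Fin m) :
    tw (fun j => !b j) i.castSucc = tw b i.castSucc := by
  have h : (i.castSucc : Fin (m+1)) ≠ Fin.last m := (Fin.castSucc_lt_last i).ne
  simp [tw, h]

lemma KK_not (b : Fin (m + 1) → Bool) :
    (KK (fun j => !b j) : ℤ) = KK b + 2 ^ m ∨ (KK (fun j => !b j) : ℤ) = KK b - 2 ^ m := by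
  have h1 := KK_eq (m := m) b
  have h2 := KK_eq (m := m) (fun j => !b j)
  have hR : (∑ i : Fin m, (tw (fun j => !b j) i.castSucc).toNat * 2 ^ (i : ℕ))
      = ∑ i : Fin m, (tw b i.castSucc).toNat * 2 ^ (i : ℕ) := by
    congr 1; funext i; rw [tw_not]
  cases hb : b (Fin.last m)
  · left; rw [h1, h2, hR]; simp [hb]
  · right; rw [h1, h2, hR]; simp [hb]

/-- the root-of-unity map -/
noncomputable def ρ (m : ℕ) (a : ℤ) : ℂ :=
  Complex.exp (2 * (Real.pi : ℂ) * Complex.I * a / 2 ^ (m + 1))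

lemma rho_add_pow (a : ℤ) : ρ m (a + 2 ^ m) = - ρ m a := by
  unfold ρ
  push_cast
  rw [show 2 * (Real.pi : ℂ) * Complex.I * ((a : ℂ) + 2 ^ m) / 2 ^ (m + 1)
      = 2 * (Real.pi : ℂ) * Complex.I * (a : ℂ) / 2 ^ (m + 1) + Real.pi * Complex.I by
    have h : (2 : ℂ) ^ (m + 1) = 2 * 2 ^ m := by ring
    field_simp [h]; ring]
  rw [Complex.exp_add, Complex.exp_pi_mul_I]
  ring

lemma rho_not (b : Fin (m + 1) → Bool) :
    ρ m (KK (fun j => !b j) : ℤ) = - ρ m (KK b : ℤ) := by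
  rcases KK_not b with h | h
  · rw [h, rho_add_pow]
  · rw [h]
    have : (KK b : ℤ) = (KK b - 2 ^ m) + 2 ^ m := by ring
    rw [show (- ρ m (KK b : ℤ)) = - ρ m ((KK b - 2 ^ m) + 2 ^ m) by rw [← this]]
    rw [rho_add_pow, neg_neg]

lemma rho_inj {a a' : ℕ} (ha : a < 2 ^ (m + 1)) (ha' : a' < 2 ^ (m + 1))
    (h : ρ m a = ρ m a') : a = a' := by
  unfold ρ at h
  rw [Complex.exp_eq_exp_iff_exists_int] at h
  obtain ⟨t, ht⟩ := h
  have hpi : (Real.pi : ℂ) ≠ 0 := by exact_mod_cast Real.pi_ne_zero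
  have h2 : (2 : ℂ) ^ (m + 1) ≠ 0 := pow_ne_zero _ two_ne_zero
  have hI : Complex.I ≠ 0 := Complex.I_ne_zero
  have key : ((a : ℤ) : ℂ) = ((a' : ℤ) : ℂ) + (t : ℂ) * 2 ^ (m + 1) := by
    field_simp at ht
    push_cast
    have := mul_left_cancel₀ (a := 2 * (Real.pi : ℂ) * Complex.I)
      (by simp [hpi, hI])
      (show 2 * (Real.pi : ℂ) * Complex.I * (a : ℂ)
          = 2 * (Real.pi : ℂ) * Complex.I * ((a' : ℂ) + (t : ℂ) * 2 ^ (m + 1)) by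
        push_cast at ht; linear_combination (2 * (Real.pi : ℂ) * Complex.I) * ht)
    linear_combination this
  have key2 : (a : ℤ) = a' + t * 2 ^ (m + 1) := by exact_mod_cast key
  set P : ℤ := 2 ^ (m + 1) with hP
  have hp : (0 : ℤ) < P := by positivity
  have ha1 : (a : ℤ) < P := by rw [hP]; exact_mod_cast ha
  have ha2 : (a' : ℤ) < P := by rw [hP]; exact_mod_cast ha'
  have hb1 : (0 : ℤ) ≤ (a : ℤ) := Int.ofNat_nonneg a
  have hb2 : (0 : ℤ) ≤ (a' : ℤ) := Int.ofNat_nonneg a'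
  have htP : t * P = (a : ℤ) - a' := by linarith
  have ht0 : t = 0 := by
    by_contra h0
    have h1 : 1 ≤ |t| := Int.one_le_abs h0
    have h2' : P ≤ |t| * P := le_mul_of_one_le_left hp.le h1
    have h3 : |t * P| < P := by
      rw [htP]
      rw [abs_lt]
      constructor <;> linarith
    rw [abs_mul, abs_of_pos hp] at h3
    linarith
  have : (a : ℤ) = a' := by rw [ht0] at key2; simpa using key2
  exact_mod_cast this


lemma not_invol : Function.Involutive (fun b : Fin (m + 1) → Bool => fun j => !b j) :=
  fun b => by funext j; simp

/-- Walsh–Fourier coefficients -/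
noncomputable def cc (m : ℕ) (T : Finset (Fin (m + 1))) : ℂ :=
  (2 ^ (m + 1) : ℂ)⁻¹ *
    ∑ b : Fin (m + 1) → Bool, ρ m (KK b : ℤ) * ∏ j ∈ T, ((sg (b j) : ℝ) : ℂ)

lemma prod_sg_not (b : Fin (m + 1) → Bool) (T : Finset (Fin (m + 1))) :
    (∏ j ∈ T, ((sg (!b j) : ℝ) : ℂ)) = (-1) ^ T.card * ∏ j ∈ T, ((sg (b j) : ℝ) : ℂ) := by
  rw [← Finset.prod_const, ← Finset.prod_mul_distrib]
  refine Finset.prod_congr rfl fun j _ => ?_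
  rw [sg_not]; ring

lemma cc_even (T : Finset (Fin (m + 1))) (hT : ¬ Odd T.card) : cc m T = 0 := by
  have hE : Even T.card := Nat.not_odd_iff_even.mp hT
  suffices h : (∑ b : Fin (m + 1) → Bool,
      ρ m (KK b : ℤ) * ∏ j ∈ T, ((sg (b j) : ℝ) : ℂ)) = 0 by
    rw [cc, h, mul_zero]
  set S := ∑ b : Fin (m + 1) → Bool, ρ m (KK b : ℤ) * ∏ j ∈ T, ((sg (b j) : ℝ) : ℂ) with hS
  have h1 : (∑ b : Fin (m + 1) → Bool,
      ρ m (KK (fun j => !b j) : ℤ) * ∏ j ∈ T, ((sg (!b j) : ℝ) : ℂ)) = S := by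
    exact Fintype.sum_bijective _ not_invol.bijective _ _ (fun b => rfl)
  have h2 : ∀ b : Fin (m + 1) → Bool,
      ρ m (KK (fun j => !b j) : ℤ) * ∏ j ∈ T, ((sg (!b j) : ℝ) : ℂ)
      = - (ρ m (KK b : ℤ) * ∏ j ∈ T, ((sg (b j) : ℝ) : ℂ)) := by
    intro b
    rw [rho_not, prod_sg_not, hE.neg_one_pow]
    ring
  rw [Finset.sum_congr rfl (fun b _ => h2 b), Finset.sum_neg_distrib] at h1
  have : S + S = 0 := by linear_combination - h1
  exact add_self_eq_zero.mp this

lemma orth (b b₀ : Fin (m + 1) → Bool) :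
    (∑ T : Finset (Fin (m + 1)), ∏ j ∈ T, (((sg (b j) : ℝ) : ℂ) * ((sg (b₀ j) : ℝ) : ℂ)))
      = if b = b₀ then (2 ^ (m + 1) : ℂ) else 0 := by
  have key := Finset.prod_add (fun j => ((sg (b j) : ℝ) : ℂ) * ((sg (b₀ j) : ℝ) : ℂ))
    (fun _ => (1 : ℂ)) Finset.univ
  simp only [Finset.prod_const_one, mul_one] at key
  rw [Finset.powerset_univ] at key
  rw [← key]
  by_cases hbb : b = b₀
  · subst hbb
    rw [if_pos rfl]
    have : ∀ j : Fin (m + 1), ((sg (b j) : ℝ) : ℂ) * ((sg (b j) : ℝ) : ℂ) + 1 = 2 := by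
      intro j; rw [sg_mul_self]; norm_num
    rw [Finset.prod_congr rfl (fun j _ => this j), Finset.prod_const]
    simp
  · rw [if_neg hbb]
    obtain ⟨j, hj⟩ : ∃ j, b j ≠ b₀ j := by
      by_contra hc
      push_neg at hc
      exact hbb (funext hc)
    refine Finset.prod_eq_zero (Finset.mem_univ j) ?_
    cases hb : b j <;> cases hb0 : b₀ j <;> simp_all [sg]

lemma eval (b₀ : Fin (m + 1) → Bool) :
    (∑ T : Finset (Fin (m + 1)), cc m T * ∏ j ∈ T, ((sg (b₀ j) : ℝ) : ℂ))
      = ρ m (KK b₀ : ℤ) := by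
  have h2 : (2 ^ (m + 1) : ℂ) ≠ 0 := pow_ne_zero _ two_ne_zero
  have step1 : ∀ T : Finset (Fin (m + 1)),
      cc m T * ∏ j ∈ T, ((sg (b₀ j) : ℝ) : ℂ)
      = (2 ^ (m + 1) : ℂ)⁻¹ * ∑ b : Fin (m + 1) → Bool,
          ρ m (KK b : ℤ) * ∏ j ∈ T, (((sg (b j) : ℝ) : ℂ) * ((sg (b₀ j) : ℝ) : ℂ)) := by
    intro T
    rw [cc, mul_assoc, Finset.sum_mul]
    congr 1
    refine Finset.sum_congr rfl fun b _ => ?_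
    rw [mul_assoc, ← Finset.prod_mul_distrib]
  rw [Finset.sum_congr rfl (fun T _ => step1 T), ← Finset.mul_sum, Finset.sum_comm]
  have step2 : ∀ b : Fin (m + 1) → Bool,
      (∑ T : Finset (Fin (m + 1)),
        ρ m (KK b : ℤ) * ∏ j ∈ T, (((sg (b j) : ℝ) : ℂ) * ((sg (b₀ j) : ℝ) : ℂ)))
      = ρ m (KK b : ℤ) * (if b = b₀ then (2 ^ (m + 1) : ℂ) else 0) := by
    intro b
    rw [← Finset.mul_sum, orth]
  rw [Finset.sum_congr rfl (fun b _ => step2 b)]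
  simp_rw [mul_ite, mul_zero]
  rw [Finset.sum_ite_eq' Finset.univ b₀ (fun b => ρ m (KK b : ℤ) * (2 ^ (m + 1) : ℂ))]
  simp only [Finset.mem_univ, if_true]
  field_simp


end PhaseAux

open PhaseAux

/-- For every positive `n` there is a multilinear sign-polynomial supported on the
odd-size subsets of `{0, …, n-1}` which maps `{±1}ⁿ` bijectively onto the set of
`2ⁿ`-th roots of unity. -/
theorem phase_encoding_exists (n : ℕ) (hn : 0 < n) :
    ∃ c : Finset (Fin n) → ℂ,
      (∀ T : Finset (Fin n), ¬ Odd T.card → c T = 0) ∧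
      Set.BijOn
        (fun s : Fin n → ℝ => ∑ T : Finset (Fin n), c T * ∏ j ∈ T, (s j : ℂ))
        {s : Fin n → ℝ | ∀ i, s i = 1 ∨ s i = -1}
        {z : ℂ | ∃ k : ℕ, k < 2 ^ n ∧
          z = Complex.exp (2 * Real.pi * Complex.I * k / 2 ^ n)} := by
  obtain ⟨m, rfl⟩ : ∃ m, n = m + 1 := ⟨n - 1, by omega⟩
  refine ⟨cc m, fun T hT => cc_even T hT, ?_⟩
  have hps : ∀ (s : Fin (m + 1) → ℝ) (b : Fin (m + 1) → Bool), (∀ j, s j = sg (b j)) →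
      (∑ T : Finset (Fin (m + 1)), cc m T * ∏ j ∈ T, ((s j : ℝ) : ℂ)) = ρ m (KK b : ℤ) := by
    intro s b hb
    rw [← eval b]
    refine Finset.sum_congr rfl fun T _ => ?_
    congr 1
    exact Finset.prod_congr rfl fun j _ => by rw [hb j]
  have hbeta : ∀ s : Fin (m + 1) → ℝ, (∀ i, s i = 1 ∨ s i = -1) →
      ∀ j, s j = sg (decide (s j = 1)) := by
    intro s hs j
    rcases hs j with h | h <;> norm_num [sg, h]
  have hrho : ∀ b : Fin (m + 1) → Bool,
      ρ m (KK b : ℤ) = Complex.exp (2 * Real.pi * Complex.I * (KK b : ℕ) / 2 ^ (m + 1)) := by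
    intro b; unfold ρ; norm_cast
  refine ⟨?_, ?_, ?_⟩
  · intro s hs
    refine ⟨KK (fun i => decide (s i = 1)), KK_lt _, ?_⟩
    rw [← hrho]
    exact hps s _ (hbeta s hs)
  · intro s hs s' hs' heq
    have h1 : ρ m (KK (fun i => decide (s i = 1)) : ℤ) = ρ m (KK (fun i => decide (s' i = 1)) : ℤ) := by
      rw [← hps s _ (hbeta s hs), ← hps s' _ (hbeta s' hs')]
      exact heq
    have h2 := rho_inj (KK_lt _) (KK_lt _) h1
    have h3 := KK_inj h2
    funext j
    have h4 : decide (s j = 1) = decide (s' j = 1) := congrFun h3 j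
    rw [hbeta s hs j, hbeta s' hs' j, h4]
  · rintro z ⟨k, hk, rfl⟩
    obtain ⟨b, hb⟩ := KK_surj hk
    refine ⟨fun j => sg (b j), fun i => ?_, ?_⟩
    · cases h : b i <;> simp [sg, h]
    · have := hps (fun j => sg (b j)) b (fun j => rfl)
      simp only at this ⊢
      rw [this, hb]
      unfold ρ
      norm_cast
end
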